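/- Let P_1, P_2, P_3 be monomial primes of S = K[x_1,...,x_n], pairwise incomparable, with P_1 + P_2 + P_3 = (x_1,...,x_n) and P_i ⊄ P_j + P_k for all distinct i, j, k. Then depth_S(S / ((P_1 + P_3) ∩ (P_2 + P_3))) = 1, and moreover (P_1 + P_3) ∩ (P_2 + P_3) = P_3 + (P_1 ∩ P_2). -/

import Mathlib

open MvPolynomial

/-- The depth of a module `M` with respect to an ideal `I`: the supremum of
lengths of `M`-regular sequences with entries in `I`. -/
noncomputable def moduleDepth (R : Type*) [CommRing R] (I : Ideal R)
    (M : Type*) [AddCommGroup M] [Module R M] : ℕ :=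
  sSup {k | ∃ rs : List R, rs.length = k ∧ (∀ r ∈ rs, r ∈ I) ∧
    RingTheory.Sequence.IsRegular M rs}

/-- The Stanley space `u·K[Z]`: the `K`-span of all monomials `u·v` with
`v` a monomial in the variables of `Z`. -/
noncomputable def stanleySpace {n : ℕ} (K : Type*) [Field K] (d : Fin n →₀ ℕ)
    (Z : Finset (Fin n)) : Submodule K (MvPolynomial (Fin n) K) :=
  Submodule.span K {f | ∃ e : Fin n →₀ ℕ, (∀ i, e i ≠ 0 → i ∈ Z) ∧
    f = monomial (d + e) (1 : K)}

/-- A Stanley decomposition of a monomial ideal `I`: a finite family of Stanley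
spaces `uᵢ·K[Zᵢ]`, with each `uᵢ ∈ I`, which are independent and whose (direct)
sum is `I` as a `K`-vector space. -/
structure StanleyDecomp {n : ℕ} (K : Type*) [Field K]
    (I : Ideal (MvPolynomial (Fin n) K)) where
  m : ℕ
  u : Fin m → (Fin n →₀ ℕ)
  Z : Fin m → Finset (Fin n)
  mem : ∀ i, monomial (u i) (1 : K) ∈ I
  indep : iSupIndep fun i => stanleySpace K (u i) (Z i)
  total : (⨆ i, stanleySpace K (u i) (Z i)) = Submodule.restrictScalars K I

/-- The Stanley depth of a monomial ideal: the largest `k` such that `I` admits a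
Stanley decomposition all of whose Stanley spaces use at least `k` variables. -/
noncomputable def sdepth {n : ℕ} {K : Type*} [Field K]
    (I : Ideal (MvPolynomial (Fin n) K)) : ℕ :=
  sSup {k | ∃ D : StanleyDecomp K I, ∀ i, k ≤ (D.Z i).card}

/-- `I` is a monomial ideal if it is generated by monomials. -/
def IsMonomialIdeal {n : ℕ} {K : Type*} [Field K]
    (I : Ideal (MvPolynomial (Fin n) K)) : Prop :=
  ∃ G : Set (Fin n →₀ ℕ), I = Ideal.span ((fun d => monomial d (1 : K)) '' G)

/-- The monomial prime ideal generated by the variables in `A`. -/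
noncomputable def varIdeal {n : ℕ} (K : Type*) [Field K] (A : Finset (Fin n)) :
    Ideal (MvPolynomial (Fin n) K) :=
  Ideal.span ((fun i => (X i : MvPolynomial (Fin n) K)) '' ↑A)

/-- The graded maximal ideal `(x_1, …, x_n)`. -/
noncomputable def maxIdeal (n : ℕ) (K : Type*) [Field K] :
    Ideal (MvPolynomial (Fin n) K) :=
  varIdeal K Finset.univ


open scoped Pointwise

section Aux

variable {K : Type*} [Field K] {n : ℕ}

/-- The substitution sending `X i` to `0` for `i ∈ A` and fixing the other variables. -/
noncomputable def sigmaHom (K : Type*) [Field K] {n : ℕ} (A : Finset (Fin n)) :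
    MvPolynomial (Fin n) K →ₐ[K] MvPolynomial (Fin n) K :=
  aeval (fun i => if i ∈ A then 0 else X i)

lemma X_mem_varIdeal {A : Finset (Fin n)} {i : Fin n} (hi : i ∈ A) :
    (X i : MvPolynomial (Fin n) K) ∈ varIdeal K A :=
  Ideal.subset_span ⟨i, hi, rfl⟩

lemma mk_comp_sigma (A : Finset (Fin n)) :
    (Ideal.Quotient.mkₐ K (varIdeal K A)).comp (sigmaHom K A) =
      Ideal.Quotient.mkₐ K (varIdeal K A) := by
  apply MvPolynomial.algHom_ext
  intro i
  simp only [AlgHom.comp_apply, sigmaHom, aeval_X]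
  by_cases hi : i ∈ A
  · simp [hi, (Ideal.Quotient.eq_zero_iff_mem).mpr (X_mem_varIdeal hi)]
  · simp [hi]

lemma sub_sigma_mem (A : Finset (Fin n)) (f : MvPolynomial (Fin n) K) :
    f - sigmaHom K A f ∈ varIdeal K A := by
  have h := congrArg (fun g => g f) (mk_comp_sigma (K := K) A)
  simp only [AlgHom.comp_apply, Ideal.Quotient.mkₐ_eq_mk] at h
  exact Ideal.Quotient.eq.mp h.symm

lemma varIdeal_eq_ker (A : Finset (Fin n)) :
    varIdeal K A = RingHom.ker (sigmaHom K A : MvPolynomial (Fin n) K →ₐ[K] _) := by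
  apply le_antisymm
  · rw [varIdeal, Ideal.span_le]
    rintro - ⟨i, hi, rfl⟩
    simp [RingHom.mem_ker, sigmaHom, Finset.mem_coe.mp hi]
  · intro f hf
    rw [RingHom.mem_ker] at hf
    have := sub_sigma_mem (K := K) A f
    rwa [hf, sub_zero] at this

lemma varIdeal_isPrime (A : Finset (Fin n)) : (varIdeal K A).IsPrime := by
  rw [varIdeal_eq_ker]
  exact RingHom.ker_isPrime _

lemma varIdeal_mono {A B : Finset (Fin n)} (h : A ⊆ B) :
    varIdeal K A ≤ varIdeal K B :=
  Ideal.span_mono (Set.image_mono (by exact_mod_cast h))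

lemma X_not_mem_varIdeal {A : Finset (Fin n)} {i : Fin n} (hi : i ∉ A) :
    (X i : MvPolynomial (Fin n) K) ∉ varIdeal K A := by
  rw [varIdeal_eq_ker, RingHom.mem_ker]
  simp [sigmaHom, hi, X_ne_zero]

lemma varIdeal_sup (A B : Finset (Fin n)) :
    varIdeal K A ⊔ varIdeal K B = varIdeal K (A ∪ B) := by
  rw [varIdeal, varIdeal, varIdeal, ← Ideal.span_union, ← Set.image_union, Finset.coe_union]

lemma sigma_mem_of_mem {A B C : Finset (Fin n)} (hBC : ∀ i ∈ B, i ∉ A → i ∈ C)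
    {f : MvPolynomial (Fin n) K} (hf : f ∈ varIdeal K B) :
    sigmaHom K A f ∈ varIdeal K C := by
  refine Submodule.span_induction ?_ ?_ ?_ ?_ hf
  · rintro - ⟨i, hi, rfl⟩
    simp only [sigmaHom, aeval_X]
    by_cases hiA : i ∈ A
    · simp [hiA]
    · simpa [hiA] using X_mem_varIdeal (hBC i hi hiA)
  · simp
  · intro x y _ _ hx hy
    simpa [map_add] using Ideal.add_mem _ hx hy
  · intro a x _ hx
    simpa [smul_eq_mul, map_mul] using Ideal.mul_mem_left _ _ hx

end Aux

section DepthAux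

variable {R : Type*} [CommRing R]

lemma smul_mk_eq {I : Ideal R} (r x : R) :
    r • (Submodule.Quotient.mk x : R ⧸ I) = Submodule.Quotient.mk (r * x) := by
  rw [← Submodule.Quotient.mk_smul, smul_eq_mul]

lemma depth_eq_one (Q1 Q2 m : Ideal R) (hQ1 : Q1.IsPrime) (hQ2 : Q2.IsPrime)
    (hm : Q1 ⊔ Q2 = m) (hmne : m ≠ ⊤)
    (f1 : R) (hf11 : f1 ∈ Q1) (hf12 : f1 ∉ Q2)
    (f2 : R) (hf21 : f2 ∈ Q2) (hf22 : f2 ∉ Q1)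
    (r0 : R) (hr0m : r0 ∈ m) (hr01 : r0 ∉ Q1) (hr02 : r0 ∉ Q2) :
    moduleDepth R m (R ⧸ (Q1 ⊓ Q2)) = 1 := by
  set I : Ideal R := Q1 ⊓ Q2 with hI
  set M := R ⧸ I with hM
  have hQ1m : Q1 ≤ m := hm ▸ le_sup_left
  have hQ2m : Q2 ≤ m := hm ▸ le_sup_right
  -- regularity criterion
  have hreg : ∀ r : R, r ∉ Q1 → r ∉ Q2 → IsSMulRegular M r := by
    intro r h1 h2 x y hxy0
    obtain ⟨f, rfl⟩ := Submodule.Quotient.mk_surjective _ x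
    obtain ⟨g, rfl⟩ := Submodule.Quotient.mk_surjective _ y
    have hxy : r • (Submodule.Quotient.mk f : M) = r • (Submodule.Quotient.mk g : M) := hxy0
    rw [smul_mk_eq, smul_mk_eq, Submodule.Quotient.eq] at hxy
    rw [Submodule.Quotient.eq]
    have he : r * f - r * g = r * (f - g) := by ring
    rw [he] at hxy
    obtain ⟨ha, hb⟩ := hxy
    refine ⟨?_, ?_⟩
    · rcases hQ1.mem_or_mem ha with h | h
      · exact absurd h h1
      · exact h
    · rcases hQ2.mem_or_mem hb with h | h
      · exact absurd h h2
      · exact h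
  -- regular elements are outside Q1 and Q2
  have hnot1 : ∀ r : R, IsSMulRegular M r → r ∉ Q1 := by
    intro r hr hrQ1
    have h0 : r • (Submodule.Quotient.mk f2 : M) = r • (0 : M) := by
      rw [smul_zero, smul_mk_eq]
      rw [Submodule.Quotient.mk_eq_zero]
      exact ⟨Ideal.mul_mem_right f2 Q1 hrQ1, Ideal.mul_mem_left Q2 r hf21⟩
    have := hr h0
    rw [Submodule.Quotient.mk_eq_zero] at this
    exact hf22 this.1
  have hnot2 : ∀ r : R, IsSMulRegular M r → r ∉ Q2 := by
    intro r hr hrQ2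
    have h0 : r • (Submodule.Quotient.mk f1 : M) = r • (0 : M) := by
      rw [smul_zero, smul_mk_eq]
      rw [Submodule.Quotient.mk_eq_zero]
      exact ⟨Ideal.mul_mem_left Q1 r hf11, Ideal.mul_mem_right f1 Q2 hrQ2⟩
    have := hr h0
    rw [Submodule.Quotient.mk_eq_zero] at this
    exact hf12 this.2
  -- the key obstruction: no second regular element
  have key : ∀ r s : R, r ∈ m → s ∈ m → IsSMulRegular M r →
      ¬ IsSMulRegular (QuotSMulTop r M) s := by
    intro r s hrm hsm hrreg hsreg
    have hr1 : r ∉ Q1 := hnot1 r hrreg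
    have hr2 : r ∉ Q2 := hnot2 r hrreg
    rw [← hm] at hrm hsm
    obtain ⟨q1, hq1, q2, hq2, hq⟩ := Submodule.mem_sup.mp hrm
    obtain ⟨a1, ha1, a2, ha2, ha⟩ := Submodule.mem_sup.mp hsm
    -- the witness element
    set ζ : QuotSMulTop r M :=
      Submodule.Quotient.mk (Submodule.Quotient.mk q2 : M) with hζdef
    have hζ0 : s • ζ = 0 := by
      rw [hζdef, ← Submodule.Quotient.mk_smul, smul_mk_eq, Submodule.Quotient.mk_eq_zero]
      have hmem : (Submodule.Quotient.mk (s * q2) : M) = r • Submodule.Quotient.mk a2 := by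
        rw [smul_mk_eq, Submodule.Quotient.eq]
        have he : s * q2 - r * a2 = a1 * q2 - q1 * a2 := by
          rw [← hq, ← ha]; ring
        rw [he]
        exact ⟨Ideal.sub_mem _ (Ideal.mul_mem_right q2 Q1 ha1) (Ideal.mul_mem_right a2 Q1 hq1),
          Ideal.sub_mem _ (Ideal.mul_mem_left Q2 a1 hq2) (Ideal.mul_mem_left Q2 q1 ha2)⟩
      rw [hmem]
      exact Submodule.smul_mem_pointwise_smul _ r ⊤ trivial
    have hζne : ζ ≠ 0 := by
      rw [hζdef, ne_eq, Submodule.Quotient.mk_eq_zero]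
      intro hmem
      obtain ⟨t', -, ht⟩ := Set.mem_smul_set.mp hmem
      obtain ⟨t, rfl⟩ := Submodule.Quotient.mk_surjective _ t'
      rw [smul_mk_eq] at ht
      have hsub : r * t - q2 ∈ I := (Submodule.Quotient.eq _).mp ht
      have htQ2 : t ∈ Q2 := by
        have : r * t ∈ Q2 := by
          have := hsub.2
          have h2' : r * t = (r * t - q2) + q2 := by ring
          rw [h2']
          exact Ideal.add_mem _ this hq2
        rcases hQ2.mem_or_mem this with h | h
        · exact absurd h hr2
        · exact h
      have ht1Q1 : t - 1 ∈ Q1 := by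
        have hq2e : q2 = r - q1 := by rw [← hq]; ring
        have : r * (t - 1) ∈ Q1 := by
          have he : r * (t - 1) = (r * t - q2) - q1 := by rw [hq2e]; ring
          rw [he]
          exact Ideal.sub_mem _ hsub.1 hq1
        rcases hQ1.mem_or_mem this with h | h
        · exact absurd h hr1
        · exact h
      have h1m : (1 : R) ∈ m := by
        have he : (1 : R) = t - (t - 1) := by ring
        rw [he]
        exact Ideal.sub_mem _ (hQ2m htQ2) (hQ1m ht1Q1)
      exact hmne ((Ideal.eq_top_iff_one m).mpr h1m)
    apply hζne
    apply hsreg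
    show s • ζ = s • 0
    rw [hζ0, smul_zero]
  -- M / r0 M ≠ 0
  have hne : r0 • (⊤ : Submodule R M) ≠ ⊤ := by
    intro h
    have h1 : (Submodule.Quotient.mk 1 : M) ∈ r0 • (⊤ : Submodule R M) := by
      rw [h]; trivial
    obtain ⟨t', -, ht⟩ := Set.mem_smul_set.mp h1
    obtain ⟨t, rfl⟩ := Submodule.Quotient.mk_surjective _ t'
    rw [smul_mk_eq] at ht
    have hsub : r0 * t - 1 ∈ I := (Submodule.Quotient.eq _).mp ht
    have h1m : (1 : R) ∈ m := by
      have he : (1 : R) = r0 * t - (r0 * t - 1) := by ring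
      rw [he]
      exact Ideal.sub_mem _ (Ideal.mul_mem_right t m hr0m) (hQ1m hsub.1)
    exact hmne ((Ideal.eq_top_iff_one m).mpr h1m)
  -- `[r0]` is a regular sequence
  have hr0reg : RingTheory.Sequence.IsRegular M [r0] := by
    rw [RingTheory.Sequence.isRegular_cons_iff]
    refine ⟨hreg r0 hr01 hr02, ⟨RingTheory.Sequence.IsWeaklyRegular.nil R _, ?_⟩⟩
    rw [Ideal.ofList_nil, Submodule.bot_smul]
    intro hbot
    apply hne
    rw [eq_top_iff]
    rintro x -
    have hx : Submodule.Quotient.mk (p := r0 • (⊤ : Submodule R M)) x ∈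
        (⊥ : Submodule R (QuotSMulTop r0 M)) := by rw [← hbot]; trivial
    rwa [Submodule.mem_bot, Submodule.Quotient.mk_eq_zero] at hx
  have h1mem : 1 ∈ {k | ∃ rs : List R, rs.length = k ∧ (∀ r ∈ rs, r ∈ m) ∧
      RingTheory.Sequence.IsRegular M rs} :=
    ⟨[r0], rfl, by simpa using hr0m, hr0reg⟩
  have hub : ∀ k ∈ {k | ∃ rs : List R, rs.length = k ∧ (∀ r ∈ rs, r ∈ m) ∧
      RingTheory.Sequence.IsRegular M rs}, k ≤ 1 := by
    rintro k ⟨rs, rfl, hmem, hr⟩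
    match rs, hmem, hr with
    | [], _, _ => exact Nat.zero_le 1
    | [r], _, _ => exact le_refl 1
    | r :: s :: rest, hmem, hr =>
      exfalso
      rw [RingTheory.Sequence.isRegular_cons_iff] at hr
      obtain ⟨hrr, hr'⟩ := hr
      rw [RingTheory.Sequence.isRegular_cons_iff] at hr'
      exact key r s (hmem r (by simp)) (hmem s (by simp)) hrr hr'.1
  rw [moduleDepth]
  exact le_antisymm (csSup_le ⟨1, h1mem⟩ hub) (le_csSup ⟨1, hub⟩ h1mem)

end DepthAux

/-- in the generic case, `depth S/((P₁+P₃) ∩ (P₂+P₃)) = 1`, and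
the modular-law identity `(P₁+P₃) ∩ (P₂+P₃) = P₃ + (P₁ ∩ P₂)` holds. -/
theorem depth_one_and_modular_identity {K : Type*} [Field K] (n : ℕ)
    (A1 A2 A3 : Finset (Fin n)) :
    letI P1 : Ideal (MvPolynomial (Fin n) K) := varIdeal K A1
    letI P2 : Ideal (MvPolynomial (Fin n) K) := varIdeal K A2
    letI P3 : Ideal (MvPolynomial (Fin n) K) := varIdeal K A3
    P1 ≠ ⊥ → P2 ≠ ⊥ → P3 ≠ ⊥ →
    ¬P1 ≤ P2 → ¬P2 ≤ P1 → ¬P1 ≤ P3 → ¬P3 ≤ P1 → ¬P2 ≤ P3 → ¬P3 ≤ P2 →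
    P1 ⊔ P2 ⊔ P3 = maxIdeal n K →
    ¬P1 ≤ P2 ⊔ P3 → ¬P2 ≤ P1 ⊔ P3 → ¬P3 ≤ P1 ⊔ P2 →
    moduleDepth (MvPolynomial (Fin n) K) (maxIdeal n K)
        (MvPolynomial (Fin n) K ⧸ ((P1 ⊔ P3) ⊓ (P2 ⊔ P3))) = 1 ∧
      (P1 ⊔ P3) ⊓ (P2 ⊔ P3) = P3 ⊔ (P1 ⊓ P2) := by
  intro h1b h2b h3b h12 h21 h13 h31 h23 h32 hsum hg1 hg2 hg3
  set P1 := varIdeal K A1 with hP1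
  set P2 := varIdeal K A2 with hP2
  set P3 := varIdeal K A3 with hP3
  have hP13 : P1 ⊔ P3 = varIdeal K (A1 ∪ A3) := varIdeal_sup A1 A3
  have hP23 : P2 ⊔ P3 = varIdeal K (A2 ∪ A3) := varIdeal_sup A2 A3
  constructor
  · -- depth part
    have hA1 : ¬ A1 ⊆ A2 ∪ A3 := by
      intro h
      exact hg1 (by rw [hP23]; exact varIdeal_mono h)
    have hA2 : ¬ A2 ⊆ A1 ∪ A3 := by
      intro h
      exact hg2 (by rw [hP13]; exact varIdeal_mono h)
    obtain ⟨a, ha1, ha23⟩ := Finset.not_subset.mp hA1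
    obtain ⟨b, hb2, hb13⟩ := Finset.not_subset.mp hA2
    have hp1 : (P1 ⊔ P3).IsPrime := by rw [hP13]; exact varIdeal_isPrime _
    have hp2 : (P2 ⊔ P3).IsPrime := by rw [hP23]; exact varIdeal_isPrime _
    have hm : (P1 ⊔ P3) ⊔ (P2 ⊔ P3) = maxIdeal n K := by
      rw [sup_sup_sup_comm, sup_idem]; exact hsum
    have hmne : maxIdeal n K ≠ ⊤ := (varIdeal_isPrime Finset.univ).ne_top
    have hf11 : (X a : MvPolynomial (Fin n) K) ∈ P1 ⊔ P3 := by
      rw [hP13]; exact X_mem_varIdeal (Finset.mem_union_left _ ha1)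
    have hf12 : (X a : MvPolynomial (Fin n) K) ∉ P2 ⊔ P3 := by
      rw [hP23]; exact X_not_mem_varIdeal ha23
    have hf21 : (X b : MvPolynomial (Fin n) K) ∈ P2 ⊔ P3 := by
      rw [hP23]; exact X_mem_varIdeal (Finset.mem_union_left _ hb2)
    have hf22 : (X b : MvPolynomial (Fin n) K) ∉ P1 ⊔ P3 := by
      rw [hP13]; exact X_not_mem_varIdeal hb13
    have hr0m : (X a + X b : MvPolynomial (Fin n) K) ∈ maxIdeal n K :=
      Ideal.add_mem _ (X_mem_varIdeal (Finset.mem_univ a))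
        (X_mem_varIdeal (Finset.mem_univ b))
    have hr01 : (X a + X b : MvPolynomial (Fin n) K) ∉ P1 ⊔ P3 := by
      intro h
      apply hf22
      have := Ideal.sub_mem _ h hf11
      simpa using this
    have hr02 : (X a + X b : MvPolynomial (Fin n) K) ∉ P2 ⊔ P3 := by
      intro h
      apply hf12
      have := Ideal.sub_mem _ h hf21
      simpa using this
    exact depth_eq_one (P1 ⊔ P3) (P2 ⊔ P3) (maxIdeal n K) hp1 hp2 hm hmne
      (X a) hf11 hf12 (X b) hf21 hf22 (X a + X b) hr0m hr01 hr02
  · -- modular identity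
    apply le_antisymm
    · rintro f ⟨hfa, hfb⟩
      rw [hP13] at hfa
      rw [hP23] at hfb
      have hf1 : sigmaHom K A3 f ∈ varIdeal K A1 := by
        refine sigma_mem_of_mem (fun i hi hiA => ?_) hfa
        rcases Finset.mem_union.mp hi with h | h
        · exact h
        · exact absurd h hiA
      have hf2 : sigmaHom K A3 f ∈ varIdeal K A2 := by
        refine sigma_mem_of_mem (fun i hi hiA => ?_) hfb
        rcases Finset.mem_union.mp hi with h | h
        · exact h
        · exact absurd h hiA
      exact Submodule.mem_sup.mpr ⟨f - sigmaHom K A3 f, sub_sigma_mem A3 f,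
        sigmaHom K A3 f, ⟨hf1, hf2⟩, by ring⟩
    · exact sup_le (le_inf le_sup_right le_sup_right)
        (inf_le_inf le_sup_left le_sup_left)
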